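/- Let a < b, and let c ∈ ℝ with f_bw·(b-a) ≤ c ≤ f_u·(b-a) where 0 < f_bw ≤ f_u. Among all integrable F : [a,b] → [f_bw, f_u] with ∫_a^b F = c, the function F*(t) = f_bw for t ∈ [a, a+τ] and F*(t) = f_u for t ∈ (a+τ, b], where τ = (f_u(b-a) - c)/(f_u - f_bw), minimizes ∫_a^b G(t) dt where G(t) = ∫_a^t F(s) ds. -/

import Mathlib

open MeasureTheory intervalIntegral

/-- The low-then-high bang-bang control with switching time `a + τ`. -/
noncomputable def lowHigh (a τ f_bw f_u : ℝ) : ℝ → ℝ := fun t => if t ≤ a + τ then f_bw else f_u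

lemma lowHigh_intervalIntegrable (a τ f_bw f_u u v : ℝ) :
    IntervalIntegrable (lowHigh a τ f_bw f_u) volume u v := by
  have hm : Measurable (lowHigh a τ f_bw f_u) :=
    Measurable.ite measurableSet_Iic measurable_const measurable_const
  rw [intervalIntegrable_iff]
  refine Integrable.mono' (g := fun _ => max |f_bw| |f_u|) ?_ hm.aestronglyMeasurable ?_
  · refine (integrableOn_const_iff).mpr (Or.inr ?_)
    rw [Set.uIoc]
    exact measure_Ioc_lt_top
  · refine Filter.Eventually.of_forall fun x => ?_
    simp only [lowHigh, Real.norm_eq_abs]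
    split
    · exact le_max_left _ _
    · exact le_max_right _ _

theorem bang_bang_min (a b f_bw f_u c : ℝ) (hab : a < b)
    (hbw : 0 < f_bw) (hbu : f_bw ≤ f_u)
    (hc₁ : f_bw * (b - a) ≤ c) (hc₂ : c ≤ f_u * (b - a)) :
    (∫ t in a..b, lowHigh a ((f_u * (b - a) - c) / (f_u - f_bw)) f_bw f_u t) = c ∧
    ∀ F : ℝ → ℝ, IntervalIntegrable F volume a b →
      (∀ t ∈ Set.Icc a b, F t ∈ Set.Icc f_bw f_u) →
      (∫ t in a..b, F t) = c →
      (∫ t in a..b, ∫ s in a..t,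
          lowHigh a ((f_u * (b - a) - c) / (f_u - f_bw)) f_bw f_u s) ≤
        ∫ t in a..b, ∫ s in a..t, F s := by
  set τ : ℝ := (f_u * (b - a) - c) / (f_u - f_bw) with hτdef
  set Fs : ℝ → ℝ := lowHigh a τ f_bw f_u with hFsdef
  have hFs_bw : ∀ s : ℝ, s ≤ a + τ → Fs s = f_bw := fun s hs => if_pos hs
  have hFs_u : ∀ s : ℝ, a + τ < s → Fs s = f_u := fun s hs => if_neg (not_le.mpr hs)
  have hτ0 : 0 ≤ τ := by
    rcases eq_or_lt_of_le hbu with h | h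
    · simp [hτdef, h]
    · exact div_nonneg (by linarith) (by linarith)
  have hτb : τ ≤ b - a := by
    rcases eq_or_lt_of_le hbu with h | h
    · simp [hτdef, h]; linarith
    · rw [hτdef, div_le_iff₀ (by linarith)]
      nlinarith
  have haτ : a ≤ a + τ := by linarith
  have hτbb : a + τ ≤ b := by linarith
  -- value of the integral of Fs over a..b
  have hlow : (∫ t in a..(a + τ), Fs t) = τ * f_bw := by
    rw [intervalIntegral.integral_congr (g := fun _ => f_bw)
      (fun s hs => hFs_bw s (by rw [Set.uIcc_of_le haτ] at hs; exact hs.2))]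
    simp [smul_eq_mul]
  have hhigh : (∫ t in (a + τ)..b, Fs t) = (b - (a + τ)) * f_u := by
    rw [intervalIntegral.integral_congr_ae (g := fun _ => f_u)
      (Filter.Eventually.of_forall fun s hs => ?_)]
    · simp [smul_eq_mul]
    · rw [Set.uIoc_of_le hτbb] at hs
      exact hFs_u s hs.1
  have hsplit : (∫ t in a..b, Fs t) = τ * f_bw + (b - (a + τ)) * f_u := by
    rw [← intervalIntegral.integral_add_adjacent_intervals
      (lowHigh_intervalIntegrable a τ f_bw f_u a (a + τ))
      (lowHigh_intervalIntegrable a τ f_bw f_u (a + τ) b), hlow, hhigh]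
  have hint1 : (∫ t in a..b, Fs t) = c := by
    rw [hsplit]
    rcases eq_or_lt_of_le hbu with h | h
    · have hτ0' : τ = 0 := by simp [hτdef, h]
      have : c = f_u * (b - a) := le_antisymm hc₂ (by rw [← h]; exact hc₁)
      rw [hτ0', this]; ring
    · have hne : f_u - f_bw ≠ 0 := by linarith
      have : τ * (f_u - f_bw) = f_u * (b - a) - c := by
        rw [hτdef]; field_simp
      nlinarith [this]
  refine ⟨hint1, fun F hF hmem hFc => ?_⟩
  -- integrability of the primitives
  have hGs_int : IntervalIntegrable (fun t => ∫ s in a..t, Fs s) volume a b :=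
    (continuousOn_primitive_interval' (lowHigh_intervalIntegrable a τ f_bw f_u a b)
      Set.left_mem_uIcc).intervalIntegrable
  have hG_int : IntervalIntegrable (fun t => ∫ s in a..t, F s) volume a b :=
    (continuousOn_primitive_interval' hF Set.left_mem_uIcc).intervalIntegrable
  refine intervalIntegral.integral_mono_on hab.le hGs_int hG_int fun t ht => ?_
  obtain ⟨hta, htb⟩ := ht
  have hFt : IntervalIntegrable F volume a t :=
    hF.mono_set (Set.uIcc_subset_uIcc Set.left_mem_uIcc
      (by rw [Set.uIcc_of_le hab.le]; exact ⟨hta, htb⟩))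
  by_cases hcase : t ≤ a + τ
  · -- low regime
    have hGs : (∫ s in a..t, Fs s) = (t - a) * f_bw := by
      rw [intervalIntegral.integral_congr (g := fun _ => f_bw)
        (fun s hs => hFs_bw s (by rw [Set.uIcc_of_le hta] at hs; exact hs.2.trans hcase))]
      simp [smul_eq_mul]
    have hGlb : (t - a) * f_bw ≤ ∫ s in a..t, F s := by
      have := intervalIntegral.integral_mono_on (f := fun _ => f_bw) (g := F) hta
        intervalIntegrable_const hFt
        (fun x hx => (hmem x ⟨hx.1, hx.2.trans htb⟩).1)
      simpa [smul_eq_mul] using this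
    rw [hGs]; exact hGlb
  · -- high regime
    push_neg at hcase
    have htτ : a + τ ≤ t := hcase.le
    have hFtb : IntervalIntegrable F volume t b :=
      hF.mono_set (Set.uIcc_subset_uIcc
        (by rw [Set.uIcc_of_le hab.le]; exact ⟨hta, htb⟩) Set.right_mem_uIcc)
    have hsplitF : (∫ s in a..t, F s) + (∫ s in t..b, F s) = c := by
      rw [intervalIntegral.integral_add_adjacent_intervals hFt hFtb, hFc]
    have hsplitFs : (∫ s in a..t, Fs s) + (∫ s in t..b, Fs s) = c := by
      rw [intervalIntegral.integral_add_adjacent_intervals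
        (lowHigh_intervalIntegrable a τ f_bw f_u a t)
        (lowHigh_intervalIntegrable a τ f_bw f_u t b), hint1]
    have hGsval : (∫ s in t..b, Fs s) = (b - t) * f_u := by
      rw [intervalIntegral.integral_congr (g := fun _ => f_u)
        (fun s hs => hFs_u s (by rw [Set.uIcc_of_le htb] at hs; exact lt_of_lt_of_le hcase hs.1))]
      simp [smul_eq_mul]
    have hFub : (∫ s in t..b, F s) ≤ (b - t) * f_u := by
      have := intervalIntegral.integral_mono_on (f := F) (g := fun _ => f_u) htb
        hFtb intervalIntegrable_const
        (fun x hx => (hmem x ⟨hta.trans hx.1, hx.2⟩).2)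
      simpa [smul_eq_mul] using this
    linarith [hsplitF, hsplitFs, hGsval, hFub]
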